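/- Let f be a non-negative function on positive n×n matrices that is positively homogeneous of degree N (f(λX) = λ^N f(X) for λ > 0) and monotone (entrywise X ≤ Y implies f(X) ≤ f(Y)). Let Δ be the simplex of positive matrices with entry sum 1 and, for 0 < δ < 1/n², let Δ^δ ⊂ Δ be the subset where all entries exceed δ. Then ∫_{Δ^δ} f dμ ≤ ∫_Δ f dμ ≤ (1 − δn²)^{−N−n²+1} ∫_{Δ^δ} f dμ, where μ is the normalized Lebesgue measure on Δ. -/

import Mathlib

open Finset MeasureTheory
open scoped NNReal ENNReal

open Set Pointwise in
lemma map_affine_hausdorff_aux {n : ℕ} (d : ℝ) (hd : 0 ≤ d) (c : ℝ) (hc : c ≠ 0)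
    (v : Fin n → Fin n → ℝ) :
    Measure.map (fun X : Fin n → Fin n → ℝ => v + c • X) (μH[d]) =
      ((‖c⁻¹‖₊ ^ d : ℝ≥0) : ℝ≥0∞) • μH[d] := by
  have hT : Measurable (fun X : Fin n → Fin n → ℝ => v + c • X) :=
    (measurable_const_smul c).const_add v
  ext A hA
  have hpre : (fun X : Fin n → Fin n → ℝ => v + c • X) ⁻¹' A
      = c⁻¹ • ((v + ·) ⁻¹' A) := by
    rw [← preimage_smul₀ hc]
    rfl
  rw [Measure.map_apply hT hA, hpre,
    Measure.hausdorffMeasure_smul₀ hd (inv_ne_zero hc), measure_preimage_add,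
    Measure.smul_apply]
  simp [ENNReal.smul_def]

lemma sum_affine_aux {n : ℕ} (a b : ℝ) (X : Fin n → Fin n → ℝ) :
    ∑ i, ∑ j, (a * X i j + b) = a * (∑ i, ∑ j, X i j) + b * (n : ℝ) ^ 2 := by
  simp [Finset.sum_add_distrib, Finset.mul_sum, Finset.card_univ]
  ring

/-- Let `f` be a non-negative function on positive `n × n` matrices, positively
homogeneous of degree `N` and entrywise monotone.  Then, with `μ` the
(normalized) Lebesgue measure on the simplex `Δ` of positive matrices with entry
sum 1 (here the `(n²−1)`-dimensional Hausdorff measure, which is proportional to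
it, so the inequalities are equivalent), and `Δ^δ` the subset where all entries
exceed `δ` (for `0 < δ < 1/n²`):
`∫_{Δ^δ} f dμ ≤ ∫_Δ f dμ ≤ (1 − δn²)^{−N−n²+1} ∫_{Δ^δ} f dμ`. -/
theorem integral_delta_interior_bounds (n N : ℕ) (hn : 0 < n)
    (f : (Fin n → Fin n → ℝ) → ℝ)
    (hf0 : ∀ X, 0 ≤ f X)
    (hhom : ∀ (X : Fin n → Fin n → ℝ) (c : ℝ), 0 < c →
      f (fun i j => c * X i j) = c ^ N * f X)
    (hmono : ∀ X Y : Fin n → Fin n → ℝ, (∀ i j, X i j ≤ Y i j) → f X ≤ f Y)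
    (δ : ℝ) (hδ : 0 < δ) (hδn : δ < 1 / (n : ℝ) ^ 2) :
    (∫⁻ X in {X : Fin n → Fin n → ℝ |
          (∀ i j, δ < X i j) ∧ ∑ i, ∑ j, X i j = 1},
        ENNReal.ofReal (f X) ∂(μH[((n : ℝ) ^ 2 - 1)]) ≤
      ∫⁻ X in {X : Fin n → Fin n → ℝ |
          (∀ i j, 0 < X i j) ∧ ∑ i, ∑ j, X i j = 1},
        ENNReal.ofReal (f X) ∂(μH[((n : ℝ) ^ 2 - 1)])) ∧
    (∫⁻ X in {X : Fin n → Fin n → ℝ |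
          (∀ i j, 0 < X i j) ∧ ∑ i, ∑ j, X i j = 1},
        ENNReal.ofReal (f X) ∂(μH[((n : ℝ) ^ 2 - 1)]) ≤
      ENNReal.ofReal ((1 - δ * n ^ 2) ^ (-(N : ℤ) - n ^ 2 + 1)) *
      ∫⁻ X in {X : Fin n → Fin n → ℝ |
          (∀ i j, δ < X i j) ∧ ∑ i, ∑ j, X i j = 1},
        ENNReal.ofReal (f X) ∂(μH[((n : ℝ) ^ 2 - 1)])) := by
  classical
  set S : Set (Fin n → Fin n → ℝ) :=
    {X | (∀ i j, 0 < X i j) ∧ ∑ i, ∑ j, X i j = 1} with hS_def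
  set S' : Set (Fin n → Fin n → ℝ) :=
    {X | (∀ i j, δ < X i j) ∧ ∑ i, ∑ j, X i j = 1} with hS'_def
  have hn1 : (1 : ℝ) ≤ (n : ℝ) := by exact_mod_cast hn
  have hn2 : (0 : ℝ) < (n : ℝ) ^ 2 := by positivity
  have hδn2 : δ * (n : ℝ) ^ 2 < 1 := by
    have := (lt_div_iff₀ hn2).mp hδn
    linarith
  set c : ℝ := 1 - δ * (n : ℝ) ^ 2 with hc_def
  have hc0 : 0 < c := by simp only [hc_def]; linarith
  set d : ℝ := (n : ℝ) ^ 2 - 1 with hd_def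
  have hd0 : 0 ≤ d := by simp only [hd_def]; nlinarith
  -- Part 1
  have hsub : S' ⊆ S := fun X hX => ⟨fun i j => hδ.trans (hX.1 i j), hX.2⟩
  refine ⟨lintegral_mono_set hsub, ?_⟩
  -- Part 2
  set v : Fin n → Fin n → ℝ := fun _ _ => δ with hv_def
  set T : (Fin n → Fin n → ℝ) ≃ₜ (Fin n → Fin n → ℝ) :=
    (Homeomorph.smulOfNeZero c hc0.ne').trans (Homeomorph.addLeft v) with hT_def
  have hTapp : ∀ X, T X = v + c • X := fun _ => rfl
  have hTij : ∀ X i j, T X i j = c * X i j + δ := by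
    intro X i j; rw [hTapp]; simp [hv_def, add_comm]
  have hTme : MeasurableEmbedding T := T.measurableEmbedding
  have sumT : ∀ X : Fin n → Fin n → ℝ,
      ∑ i, ∑ j, T X i j = c * (∑ i, ∑ j, X i j) + δ * (n : ℝ) ^ 2 := by
    intro X
    simp only [hTij]
    exact sum_affine_aux c δ X
  -- T maps S bijectively onto S'
  have hTS : T '' S = S' := by
    ext Y
    constructor
    · rintro ⟨X, ⟨hXpos, hXsum⟩, rfl⟩
      refine ⟨fun i j => ?_, ?_⟩
      · rw [hTij]
        have := hXpos i j
        nlinarith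
      · rw [sumT, hXsum]
        simp only [hc_def]; ring
    · rintro ⟨hYpos, hYsum⟩
      refine ⟨fun i j => c⁻¹ * (Y i j - δ), ⟨fun i j => ?_, ?_⟩, ?_⟩
      · have h1 := hYpos i j
        have h2 : 0 < Y i j - δ := by linarith
        positivity
      · have hsum : ∑ i, ∑ j, c⁻¹ * (Y i j - δ)
            = c⁻¹ * (∑ i, ∑ j, Y i j) + (-(c⁻¹ * δ)) * (n : ℝ) ^ 2 := by
          rw [← sum_affine_aux c⁻¹ (-(c⁻¹ * δ)) Y]
          congr 1; funext i; congr 1; funext j; ring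
        rw [hsum, hYsum]
        have : c⁻¹ * c = 1 := inv_mul_cancel₀ hc0.ne'
        simp only [hc_def] at this ⊢
        nlinarith [this]
      · funext i j
        rw [hTij]
        field_simp
        ring
  -- the pushforward of Hausdorff measure under T
  have hmap : Measure.map T (μH[d] : Measure (Fin n → Fin n → ℝ))
      = ((‖c⁻¹‖₊ ^ d : ℝ≥0) : ℝ≥0∞) • μH[d] := by
    have h : (T : (Fin n → Fin n → ℝ) → (Fin n → Fin n → ℝ))
        = fun X => v + c • X := funext hTapp
    rw [h]
    exact map_affine_hausdorff_aux d hd0 c hc0.ne' v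
  -- change of variables
  have key : ∫⁻ X in S, ENNReal.ofReal (f (T X)) ∂μH[d]
      = ((‖c⁻¹‖₊ ^ d : ℝ≥0) : ℝ≥0∞) * ∫⁻ Y in S', ENNReal.ofReal (f Y) ∂μH[d] := by
    calc ∫⁻ X in S, ENNReal.ofReal (f (T X)) ∂μH[d]
        = ∫⁻ Y, ENNReal.ofReal (f Y) ∂(Measure.map T (μH[d].restrict S)) :=
          (hTme.lintegral_map (fun Y => ENNReal.ofReal (f Y))).symm
      _ = ∫⁻ Y, ENNReal.ofReal (f Y)
            ∂((Measure.map T (μH[d] : Measure (Fin n → Fin n → ℝ))).restrict (T '' S)) := by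
          rw [hTme.restrict_map, Set.preimage_image_eq _ hTme.injective]
      _ = ((‖c⁻¹‖₊ ^ d : ℝ≥0) : ℝ≥0∞) * ∫⁻ Y in S', ENNReal.ofReal (f Y) ∂μH[d] := by
          rw [hmap, hTS, Measure.restrict_smul, lintegral_smul_measure, smul_eq_mul]
  -- pointwise bound
  have hpt : ∀ X, ENNReal.ofReal (f X)
      ≤ ENNReal.ofReal (c ^ (-(N : ℤ))) * ENNReal.ofReal (f (T X)) := by
    intro X
    have h1 : f (fun i j => c * X i j) = c ^ N * f X := hhom X c hc0
    have h2 : f (fun i j => c * X i j) ≤ f (T X) := by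
      refine hmono _ _ fun i j => ?_
      rw [hTij]
      linarith [hδ.le]
    have h3 : c ^ N * f X ≤ f (T X) := h1 ▸ h2
    have hcN : (0 : ℝ) < c ^ N := pow_pos hc0 N
    have h4 : f X ≤ c ^ (-(N : ℤ)) * f (T X) := by
      rw [zpow_neg, zpow_natCast, inv_mul_eq_div, le_div_iff₀ hcN]
      nlinarith [h3]
    calc ENNReal.ofReal (f X) ≤ ENNReal.ofReal (c ^ (-(N : ℤ)) * f (T X)) :=
          ENNReal.ofReal_le_ofReal h4
      _ = ENNReal.ofReal (c ^ (-(N : ℤ))) * ENNReal.ofReal (f (T X)) :=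
          ENNReal.ofReal_mul (zpow_nonneg hc0.le _)
  -- the coefficient identity
  have hnorm : ((‖c⁻¹‖₊ ^ d : ℝ≥0) : ℝ≥0∞) = ENNReal.ofReal (c⁻¹ ^ d) := by
    have h1 : (‖c⁻¹‖₊ ^ d : ℝ≥0) = Real.toNNReal (c⁻¹ ^ d) := by
      ext
      rw [NNReal.coe_rpow, coe_nnnorm, Real.norm_of_nonneg (inv_nonneg.mpr hc0.le),
        Real.coe_toNNReal _ (Real.rpow_nonneg (inv_nonneg.mpr hc0.le) _)]
    rw [h1]
    rfl
  have hcoef : ENNReal.ofReal (c ^ (-(N : ℤ))) * ((‖c⁻¹‖₊ ^ d : ℝ≥0) : ℝ≥0∞)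
      = ENNReal.ofReal (c ^ (-(N : ℤ) - (n : ℤ) ^ 2 + 1)) := by
    rw [hnorm, ← ENNReal.ofReal_mul (zpow_nonneg hc0.le _)]
    congr 1
    have h2 : c⁻¹ ^ d = c ^ (-d) := by
      rw [Real.rpow_neg hc0.le d, Real.inv_rpow hc0.le]
    rw [h2, ← Real.rpow_intCast c (-(N : ℤ)), ← Real.rpow_add hc0,
      ← Real.rpow_intCast c (-(N : ℤ) - (n : ℤ) ^ 2 + 1)]
    congr 1
    push_cast [hd_def]
    ring
  -- final assembly
  calc ∫⁻ X in S, ENNReal.ofReal (f X) ∂μH[d]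
      ≤ ∫⁻ X in S, ENNReal.ofReal (c ^ (-(N : ℤ))) * ENNReal.ofReal (f (T X)) ∂μH[d] :=
        lintegral_mono fun X => hpt X
    _ = ENNReal.ofReal (c ^ (-(N : ℤ))) * ∫⁻ X in S, ENNReal.ofReal (f (T X)) ∂μH[d] :=
        lintegral_const_mul' _ _ ENNReal.ofReal_ne_top
    _ = ENNReal.ofReal (c ^ (-(N : ℤ))) *
          (((‖c⁻¹‖₊ ^ d : ℝ≥0) : ℝ≥0∞) * ∫⁻ Y in S', ENNReal.ofReal (f Y) ∂μH[d]) := by rw [key]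
    _ = ENNReal.ofReal (c ^ (-(N : ℤ) - (n : ℤ) ^ 2 + 1)) *
          ∫⁻ Y in S', ENNReal.ofReal (f Y) ∂μH[d] := by rw [← mul_assoc, hcoef]
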